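/- (Sufficient condition for parsimony.) Let s : P⊗C₀ → T⊗C₀ be a simulator in a target–context category and let r* : s → id be a lax reduction (r : T → P functional, s∘(r⊗id_{C₀}) ⪰ id_{T⊗C₀}) which is also an oplax reduction (id_{T⊗C₀} ⪰ s∘(r⊗id_{C₀})). If there exists a functional morphism m : P → T satisfying s∘((r∘m)⊗id_{C₀}) = s, then there exists a simulator morphism id → s from the trivial simulator to s; i.e. s is more parsimonious than the trivial simulator. -/

import Mathlib

open CategoryTheory MonoidalCategory

universe w v u v' u'

/-- A gs-monoidal category: a symmetric monoidal category in which every object carries a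
commutative comonoid structure (copy and discard), compatible with tensor products. -/
class GSCat (C : Type u) [Category.{v} C] [MonoidalCategory C] [SymmetricCategory C] where
  copy : ∀ A : C, A ⟶ A ⊗ A
  discard : ∀ A : C, A ⟶ 𝟙_ C
  copy_assoc : ∀ A : C, copy A ≫ (copy A ▷ A) ≫ (α_ A A A).hom = copy A ≫ (A ◁ copy A)
  copy_comm : ∀ A : C, copy A ≫ (β_ A A).hom = copy A
  copy_counit_left : ∀ A : C, copy A ≫ (discard A ▷ A) ≫ (λ_ A).hom = 𝟙 A
  copy_counit_right : ∀ A : C, copy A ≫ (A ◁ discard A) ≫ (ρ_ A).hom = 𝟙 A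
  copy_tensor : ∀ A X : C, copy (A ⊗ X) = (copy A ⊗ₘ copy X) ≫ tensorμ A A X X
  discard_tensor : ∀ A X : C, discard (A ⊗ X) = (discard A ⊗ₘ discard X) ≫ (λ_ (𝟙_ C)).hom
  discard_unit : discard (𝟙_ C) = 𝟙 (𝟙_ C)

variable {C : Type u} [Category.{v} C] [MonoidalCategory C] [SymmetricCategory C] [GSCat C]

/-- The domain `dom(f) = ρ_A ∘ (id_A ⊗ (ε_X ∘ f)) ∘ Δ_A` of a morphism `f : A ⟶ X`. -/
def gsDom {A X : C} (f : A ⟶ X) : A ⟶ A :=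
  GSCat.copy A ≫ (A ◁ (f ≫ GSCat.discard X)) ≫ (ρ_ A).hom

/-- A morphism is normalized if `f ∘ dom(f) = f`. -/
def GsNormalized {A X : C} (f : A ⟶ X) : Prop := gsDom f ≫ f = f

/-- A morphism is functional if `Δ_X ∘ f = (f ⊗ f) ∘ Δ_A`. -/
def GsFunctional {A X : C} (f : A ⟶ X) : Prop :=
  f ≫ GSCat.copy X = GSCat.copy A ≫ (f ⊗ₘ f)

/-- A morphism is total if `ε_X ∘ f = ε_A`. -/
def GsTotal {A X : C} (f : A ⟶ X) : Prop := f ≫ GSCat.discard X = GSCat.discard A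

/-- `f ⊒ g` : `f` agrees with `g` on the domain of `g`, i.e. `f ∘ dom(g) = g`. -/
def GsRestrict {A X : C} (f g : A ⟶ X) : Prop := gsDom g ≫ f = g

/-- A gs-monoidal category is normalized if all of its morphisms are normalized. -/
class GsNormalizedCat (C : Type u) [Category.{v} C] [MonoidalCategory C]
    [SymmetricCategory C] [GSCat C] : Prop where
  norm : ∀ {A X : C} (f : A ⟶ X), GsNormalized f

/-- A target--context category: a (normalized) gs-monoidal category with distinguished
objects `T` (targets) and `C0` (contexts) together with an ambient preorder on each
hom-set into `T ⊗ C0`, containing the restriction order and preserved by precomposition. -/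
structure TCC (C : Type u) [Category.{v} C] [MonoidalCategory C] [SymmetricCategory C]
    [GSCat C] (T C0 : C) where
  amb : ∀ {A : C}, (A ⟶ T ⊗ C0) → (A ⟶ T ⊗ C0) → Prop
  amb_refl : ∀ {A : C} (f : A ⟶ T ⊗ C0), amb f f
  amb_trans : ∀ {A : C} {f g h : A ⟶ T ⊗ C0}, amb f g → amb g h → amb f h
  amb_of_restrict : ∀ {A : C} {f g : A ⟶ T ⊗ C0}, GsRestrict f g → amb f g
  amb_precomp : ∀ {A Z : C} {f g : A ⟶ T ⊗ C0} (h : Z ⟶ A), amb f g → amb (h ≫ f) (h ≫ g)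

/-- A simulator: a morphism `s : P ⊗ C0 ⟶ T ⊗ C0` of the form
`s = (s_T ⊗ s_C) ∘ (Δ_P ⊗ id)` with functional compiler `s_T : P ⟶ T` and
context reduction `s_C : P ⊗ C0 ⟶ C0`. -/
structure Simulator {C : Type u} [Category.{v} C] [MonoidalCategory C] [SymmetricCategory C]
    [GSCat C] (T C0 P : C) where
  s : P ⊗ C0 ⟶ T ⊗ C0
  sT : P ⟶ T
  sC : P ⊗ C0 ⟶ C0
  sT_functional : GsFunctional sT
  split : s = (GSCat.copy P ▷ C0) ≫ (α_ P P C0).hom ≫ (sT ⊗ₘ sC)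

/-- A processing with programs `P`: a morphism `q : P ⊗ (T ⊗ C0) ⟶ T ⊗ C0` that splits as a
simulator with programs `P ⊗ T` and is behaviorally dominated by discarding `P`. -/
structure Processing {T C0 : C} (𝒯 : TCC C T C0) (P : C) where
  q : P ⊗ (T ⊗ C0) ⟶ T ⊗ C0
  qT : P ⊗ T ⟶ T
  qC : (P ⊗ T) ⊗ C0 ⟶ C0
  qT_functional : GsFunctional qT
  split : q = (α_ P T C0).inv ≫ (GSCat.copy (P ⊗ T) ▷ C0) ≫
      (α_ (P ⊗ T) (P ⊗ T) C0).hom ≫ (qT ⊗ₘ qC)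
  weak : 𝒯.amb ((GSCat.discard P ▷ (T ⊗ C0)) ≫ (λ_ (T ⊗ C0)).hom) q

/-- A simulator morphism `s → s'` : a reduction `r : P' ⟶ P` (giving the pulled-back
simulator `r*s := s ∘ (r ⊗ id)`) together with a processing `q` mapping `r*s` to `s'`,
i.e. `s' = q ∘ (id ⊗ r*s) ∘ (Δ ⊗ id)`. -/
structure SimMor {T C0 : C} (𝒯 : TCC C T C0) {P P' : C}
    (s : Simulator T C0 P) (s' : Simulator T C0 P') where
  r : P' ⟶ P
  r_functional : GsFunctional r
  proc : Processing 𝒯 P'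
  hit : (GSCat.copy P' ▷ C0) ≫ (α_ P' P' C0).hom ≫
      (P' ◁ ((r ▷ C0) ≫ s.s)) ≫ proc.q = s'.s

section Aux

lemma gsFunctional_id (A : C) : GsFunctional (𝟙 A) := by
  simp [GsFunctional]

lemma gsFunctional_comp {A B D : C} {f : A ⟶ B} {g : B ⟶ D}
    (hf : GsFunctional f) (hg : GsFunctional g) : GsFunctional (f ≫ g) := by
  unfold GsFunctional at *
  rw [Category.assoc, hg, ← Category.assoc, hf, Category.assoc, tensorHom_comp_tensorHom]

lemma copy_discard_left (A : C) :
    GSCat.copy A ≫ (GSCat.discard A ▷ A) = (λ_ A).inv := by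
  have h := GSCat.copy_counit_left (C := C) A
  calc GSCat.copy A ≫ GSCat.discard A ▷ A
      = (GSCat.copy A ≫ GSCat.discard A ▷ A ≫ (λ_ A).hom) ≫ (λ_ A).inv := by simp
    _ = (λ_ A).inv := by rw [h]; simp

lemma copy_discard_right (A : C) :
    GSCat.copy A ≫ (A ◁ GSCat.discard A) = (ρ_ A).inv := by
  have h := GSCat.copy_counit_right (C := C) A
  calc GSCat.copy A ≫ A ◁ GSCat.discard A
      = (GSCat.copy A ≫ A ◁ GSCat.discard A ≫ (ρ_ A).hom) ≫ (ρ_ A).inv := by simp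
    _ = (ρ_ A).inv := by rw [h]; simp

lemma copy_both_discard (A : C) :
    GSCat.copy A ≫ (GSCat.discard A ⊗ₘ GSCat.discard A) =
      GSCat.discard A ≫ (λ_ (𝟙_ C)).inv := by
  rw [tensorHom_def', ← Category.assoc, copy_discard_right,
    ← rightUnitor_inv_naturality, unitors_inv_equal]

lemma proj2_functional (P T : C) :
    GsFunctional ((GSCat.discard P ▷ T) ≫ (λ_ T).hom) := by
  unfold GsFunctional
  rw [GSCat.copy_tensor]
  symm
  have nat : ((GSCat.discard P ⊗ₘ GSCat.discard P) ⊗ₘ (𝟙 T ⊗ₘ 𝟙 T)) ≫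
      tensorμ (𝟙_ C) (𝟙_ C) T T =
      tensorμ P P T T ≫ ((GSCat.discard P ⊗ₘ 𝟙 T) ⊗ₘ (GSCat.discard P ⊗ₘ 𝟙 T)) :=
    tensorμ_natural (GSCat.discard P) (GSCat.discard P) (𝟙 T) (𝟙 T)
  calc ((GSCat.copy P ⊗ₘ GSCat.copy T) ≫ tensorμ P P T T) ≫
        ((GSCat.discard P ▷ T ≫ (λ_ T).hom) ⊗ₘ (GSCat.discard P ▷ T ≫ (λ_ T).hom))
      = (GSCat.copy P ⊗ₘ GSCat.copy T) ≫ tensorμ P P T T ≫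
        ((GSCat.discard P ⊗ₘ 𝟙 T) ⊗ₘ (GSCat.discard P ⊗ₘ 𝟙 T)) ≫
        ((λ_ T).hom ⊗ₘ (λ_ T).hom) := by
        simp [← tensorHom_comp_tensorHom, tensorHom_id]
    _ = (GSCat.copy P ⊗ₘ GSCat.copy T) ≫
        ((GSCat.discard P ⊗ₘ GSCat.discard P) ⊗ₘ (𝟙 T ⊗ₘ 𝟙 T)) ≫
        tensorμ (𝟙_ C) (𝟙_ C) T T ≫ ((λ_ T).hom ⊗ₘ (λ_ T).hom) := by
        rw [← Category.assoc (tensorμ P P T T), ← nat]; simp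
    _ = ((GSCat.copy P ≫ (GSCat.discard P ⊗ₘ GSCat.discard P)) ⊗ₘ GSCat.copy T) ≫
        tensorμ (𝟙_ C) (𝟙_ C) T T ≫ ((λ_ T).hom ⊗ₘ (λ_ T).hom) := by
        rw [← Category.assoc, tensorHom_comp_tensorHom]; simp
    _ = ((GSCat.discard P ≫ (λ_ (𝟙_ C)).inv) ⊗ₘ GSCat.copy T) ≫
        tensorμ (𝟙_ C) (𝟙_ C) T T ≫ ((λ_ T).hom ⊗ₘ (λ_ T).hom) := by
        rw [copy_both_discard]
    _ = (GSCat.discard P ⊗ₘ GSCat.copy T) ≫ ((λ_ (𝟙_ C)).inv ▷ (T ⊗ T)) ≫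
        tensorμ (𝟙_ C) (𝟙_ C) T T ≫ ((λ_ T).hom ⊗ₘ (λ_ T).hom) := by
        rw [← tensorHom_id, tensorHom_comp_tensorHom_assoc]; simp
    _ = (GSCat.discard P ⊗ₘ GSCat.copy T) ≫ (λ_ (T ⊗ T)).hom := by
        rw [← tensor_left_unitality]
    _ = (GSCat.discard P ▷ T ≫ (λ_ T).hom) ≫ GSCat.copy T := by
        rw [MonoidalCategory.tensorHom_def]
        simp [leftUnitor_naturality]

end Aux

/-- Sufficient condition for parsimony: if `r* : s → id` is a lax and oplax
reduction and there is a functional `m : P ⟶ T` with `s ∘ ((r ∘ m) ⊗ₘ id) = s`, then there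
is a simulator morphism from the trivial simulator (the identity on `T ⊗ C0`) to `s`. -/
theorem parsimony_sufficient [GsNormalizedCat C] {T C0 : C} (𝒯 : TCC C T C0) {P : C}
    (s : Simulator T C0 P) (r : T ⟶ P) (hr : GsFunctional r)
    (hlax : 𝒯.amb ((r ▷ C0) ≫ s.s) (𝟙 (T ⊗ C0)))
    (hoplax : 𝒯.amb (𝟙 (T ⊗ C0)) ((r ▷ C0) ≫ s.s))
    (m : P ⟶ T) (hm : GsFunctional m)
    (hinv : ((m ≫ r) ▷ C0) ≫ s.s = s.s) :
    ∃ triv : Simulator T C0 T, triv.s = 𝟙 (T ⊗ C0) ∧ triv.sT = 𝟙 T ∧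
      triv.sC = (GSCat.discard T ▷ C0) ≫ (λ_ C0).hom ∧
      Nonempty (SimMor 𝒯 triv s) := by
  -- the trivial simulator
  have triv_split : 𝟙 (T ⊗ C0) = (GSCat.copy T ▷ C0) ≫ (α_ T T C0).hom ≫
      (𝟙 T ⊗ₘ ((GSCat.discard T ▷ C0) ≫ (λ_ C0).hom)) := by
    rw [id_tensorHom, MonoidalCategory.whiskerLeft_comp,
      ← associator_naturality_middle_assoc, MonoidalCategory.triangle,
      ← comp_whiskerRight_assoc, ← comp_whiskerRight, Category.assoc,
      GSCat.copy_counit_right, id_whiskerRight]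
  refine ⟨⟨𝟙 (T ⊗ C0), 𝟙 T, (GSCat.discard T ▷ C0) ≫ (λ_ C0).hom,
    gsFunctional_id T, triv_split⟩, rfl, rfl, rfl, ?_⟩
  -- the processing
  set h : P ⊗ T ⟶ P := ((GSCat.discard P ▷ T) ≫ (λ_ T).hom) ≫ r with hh
  have hfun : GsFunctional h := gsFunctional_comp (proj2_functional P T) hr
  have key : GSCat.copy P ≫ (P ◁ m) ≫ h = m ≫ r := by
    rw [hh]
    simp only [Category.assoc]
    rw [whisker_exchange_assoc, MonoidalCategory.leftUnitor_naturality_assoc,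
      ← Category.assoc (GSCat.copy P), copy_discard_left]
    simp
  have qeq : (α_ P T C0).inv ≫ (h ▷ C0) ≫ s.s =
      (GSCat.discard P ▷ (T ⊗ C0)) ≫ (λ_ (T ⊗ C0)).hom ≫ ((r ▷ C0) ≫ s.s) := by
    rw [hh, comp_whiskerRight, comp_whiskerRight, leftUnitor_tensor_hom]
    simp only [Category.assoc]
    rw [associator_inv_naturality_left_assoc]
  have step : (h ▷ C0) ≫ s.s = (GSCat.copy (P ⊗ T) ▷ C0) ≫
      (α_ (P ⊗ T) (P ⊗ T) C0).hom ≫ ((h ≫ s.sT) ⊗ₘ ((h ▷ C0) ≫ s.sC)) := by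
    rw [s.split]
    calc h ▷ C0 ≫ GSCat.copy P ▷ C0 ≫ (α_ P P C0).hom ≫ (s.sT ⊗ₘ s.sC)
        = ((h ≫ GSCat.copy P) ▷ C0) ≫ (α_ P P C0).hom ≫ (s.sT ⊗ₘ s.sC) := by
          rw [← comp_whiskerRight_assoc]
      _ = ((GSCat.copy (P ⊗ T) ≫ (h ⊗ₘ h)) ▷ C0) ≫ (α_ P P C0).hom ≫
          (s.sT ⊗ₘ s.sC) := by rw [hfun]
      _ = (GSCat.copy (P ⊗ T) ▷ C0) ≫ (((h ⊗ₘ h) ⊗ₘ 𝟙 C0) ≫ (α_ P P C0).hom) ≫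
          (s.sT ⊗ₘ s.sC) := by rw [comp_whiskerRight, tensorHom_id]; simp
      _ = (GSCat.copy (P ⊗ T) ▷ C0) ≫ ((α_ (P ⊗ T) (P ⊗ T) C0).hom ≫
          (h ⊗ₘ (h ⊗ₘ 𝟙 C0))) ≫ (s.sT ⊗ₘ s.sC) := by rw [associator_naturality]
      _ = (GSCat.copy (P ⊗ T) ▷ C0) ≫ (α_ (P ⊗ T) (P ⊗ T) C0).hom ≫
          ((h ≫ s.sT) ⊗ₘ ((h ▷ C0) ≫ s.sC)) := by
          simp only [Category.assoc]
          rw [tensorHom_comp_tensorHom, tensorHom_id]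
  have hsplit : (α_ P T C0).inv ≫ (h ▷ C0) ≫ s.s =
      (α_ P T C0).inv ≫ (GSCat.copy (P ⊗ T) ▷ C0) ≫
      (α_ (P ⊗ T) (P ⊗ T) C0).hom ≫ ((h ≫ s.sT) ⊗ₘ ((h ▷ C0) ≫ s.sC)) := by
    rw [step]
  refine ⟨⟨m, hm, ⟨(α_ P T C0).inv ≫ (h ▷ C0) ≫ s.s, h ≫ s.sT, (h ▷ C0) ≫ s.sC,
    gsFunctional_comp hfun s.sT_functional, hsplit, ?_⟩, ?_⟩⟩
  · -- weak
    rw [qeq]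
    have := 𝒯.amb_precomp
      ((GSCat.discard P ▷ (T ⊗ C0)) ≫ (λ_ (T ⊗ C0)).hom) hoplax
    simpa using this
  · -- hit
    show (GSCat.copy P ▷ C0) ≫ (α_ P P C0).hom ≫
      (P ◁ ((m ▷ C0) ≫ 𝟙 (T ⊗ C0))) ≫ (α_ P T C0).inv ≫ (h ▷ C0) ≫ s.s = s.s
    rw [Category.comp_id]
    calc (GSCat.copy P ▷ C0) ≫ (α_ P P C0).hom ≫ (P ◁ (m ▷ C0)) ≫
          (α_ P T C0).inv ≫ (h ▷ C0) ≫ s.s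
        = (GSCat.copy P ▷ C0) ≫ (α_ P P C0).hom ≫ (α_ P P C0).inv ≫
          ((P ◁ m) ▷ C0) ≫ (h ▷ C0) ≫ s.s := by
          rw [associator_inv_naturality_middle_assoc]
      _ = ((GSCat.copy P ≫ (P ◁ m) ≫ h) ▷ C0) ≫ s.s := by
          simp [comp_whiskerRight]
      _ = ((m ≫ r) ▷ C0) ≫ s.s := by rw [key]
      _ = s.s := hinv
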